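/- In the labelled hypercube Q_d, for every ordered pair of distinct vertices u and v there is exactly one temporal path from u to v. In particular, when u and v are adjacent, the unique temporal path from u to v is the single edge uv together with its label. -/

import Mathlib

open scoped ENNReal BigOperators

/-- A temporal path from `u` to `v`, given as a list of steps `(next vertex, time label)`.
The labelling `lab` gives, for each (ordered) pair of vertices, the set of time labels of the
edge joining them (empty if there is no edge); it is symmetric for temporal graphs arising
from strategy profiles.  The conditions say that consecutive steps use time labels belonging
to the corresponding edge, that time labels strictly increase along the path, that no vertex is
repeated, and that the path ends at `v`. -/
def IsTemporalPath {V : Type*} (lab : V → V → Set ℕ) (u v : V) (p : List (V × ℕ)) : Prop :=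
  List.Chain (fun a b => b.2 ∈ lab a.1 b.1) (u, 0) p ∧
  List.Chain' (· < ·) (p.map Prod.snd) ∧
  (u :: p.map Prod.fst).Nodup ∧
  (u :: p.map Prod.fst).getLast (List.cons_ne_nil _ _) = v

/-- The temporal shortest distance from `u` to `v`: the least number of edges of a temporal
path from `u` to `v` (`0` if `u = v`, `⊤` if there is no temporal path). -/
noncomputable def temporalDist {V : Type*} (lab : V → V → Set ℕ) (u v : V) : ℕ∞ :=
  sInf {n : ℕ∞ | ∃ p : List (V × ℕ), IsTemporalPath lab u v p ∧ (p.length : ℕ∞) = n}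

/-- The labelling of the communication temporal graph `𝒢[s]` of a strategy profile `s`:
`t` is a label of the edge `uv` iff `(u, t) ∈ s v` or `(v, t) ∈ s u`. -/
def profLab {V : Type*} (s : V → Finset (V × ℕ)) : V → V → Set ℕ :=
  fun u v => {t | (u, t) ∈ s v ∨ (v, t) ∈ s u}

/-- The (finite) set of time labels of the edge `uv` in the communication temporal graph. -/
def labelFinset {V : Type*} [DecidableEq V] (s : V → Finset (V × ℕ)) (u v : V) : Finset ℕ :=
  (((s v).filter (fun p => p.1 = u)).image Prod.snd) ∪
    (((s u).filter (fun p => p.1 = v)).image Prod.snd)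

/-- The total number of time labels `∑ e ∈ E, |λ(e)|` of the communication temporal graph
(each unordered pair is counted once, whence the division by `2`). -/
def numLabels {V : Type*} [Fintype V] [DecidableEq V] (s : V → Finset (V × ℕ)) : ℕ :=
  (∑ u : V, ∑ v : V, if u = v then 0 else (labelFinset s u v).card) / 2

/-- The number of edges `|E|` of the communication temporal graph. -/
def numEdges {V : Type*} [Fintype V] [DecidableEq V] (s : V → Finset (V × ℕ)) : ℕ :=
  ((Finset.univ : Finset (V × V)).filter
    (fun q => q.1 ≠ q.2 ∧ (labelFinset s q.1 q.2).Nonempty)).card / 2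

/-- The social cost `c[s] = α·∑_{e ∈ E} |λ(e)| + ∑_{(u,v) ∈ V×V} d_{𝒢[s]}(u,v)`
of a strategy profile `s` for atomic cost `α`. -/
noncomputable def socialCost {V : Type*} [Fintype V] [DecidableEq V]
    (α : ℝ) (s : V → Finset (V × ℕ)) : ℝ≥0∞ :=
  ENNReal.ofReal α * (numLabels s : ℝ≥0∞) +
    ∑ u : V, ∑ v : V, (temporalDist (profLab s) u v : ℝ≥0∞)

/-- The individual cost `c[s](v) = α·|s(v)| + ∑_{w ∈ V} d_{𝒢[s]}(v,w)` of player `v`. -/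
noncomputable def indivCost {V : Type*} [Fintype V]
    (α : ℝ) (s : V → Finset (V × ℕ)) (v : V) : ℝ≥0∞ :=
  ENNReal.ofReal α * ((s v).card : ℝ≥0∞) +
    ∑ w : V, (temporalDist (profLab s) v w : ℝ≥0∞)

/-- A strategy profile is a Nash equilibrium if no player can strictly decrease its individual
cost by changing only its own strategy. -/
def IsNash {V : Type*} [Fintype V] [DecidableEq V] (α : ℝ) (s : V → Finset (V × ℕ)) : Prop :=
  ∀ (v : V) (t : Finset (V × ℕ)),
    ¬ indivCost α (Function.update s v t) v < indivCost α s v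

/-- The optimal social cost `c*(α, n)`: the minimum social cost over all strategy profiles
with `n` players and atomic cost `α`. -/
noncomputable def optCost (α : ℝ) (n : ℕ) : ℝ≥0∞ :=
  ⨅ s : Fin n → Finset (Fin n × ℕ), socialCost α s

/-- The price of anarchy `PoA(α, n)`: the maximum social cost of a Nash equilibrium with `n`
players and atomic cost `α`, divided by the optimal social cost `c*(α, n)`. -/
noncomputable def PoA (α : ℝ) (n : ℕ) : ℝ≥0∞ :=
  (⨆ s : {s : Fin n → Finset (Fin n × ℕ) // IsNash α s}, socialCost α s.1) / optCost α n

/-- The price of stability `PoS(α, n)`: the minimum social cost of a Nash equilibrium with `n`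
players and atomic cost `α`, divided by the optimal social cost `c*(α, n)`. -/
noncomputable def PoS (α : ℝ) (n : ℕ) : ℝ≥0∞ :=
  (⨅ s : {s : Fin n → Finset (Fin n × ℕ) // IsNash α s}, socialCost α s.1) / optCost α n

/-- The labelling of the hypercube `Q_d`: vertices are elements of `{0,1}^d`, two vertices
are joined by an edge iff they differ in exactly one coordinate, and the edge whose
endpoints differ in coordinate `i` (for `0 ≤ i < d`) carries the single time label `i + 1`. -/
def QLab (d : ℕ) : (Fin d → Bool) → (Fin d → Bool) → Set ℕ := fun u v =>
  {t | ∃ i : Fin d, t = (i : ℕ) + 1 ∧ u i ≠ v i ∧ ∀ j : Fin d, j ≠ i → u j = v j}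

section QAux
variable {d : ℕ}

def qflip (u : Fin d → Bool) (i : Fin d) : Fin d → Bool := Function.update u i (!u i)

lemma qflip_self (u : Fin d → Bool) (i : Fin d) : qflip u i i = !u i := by
  simp [qflip]

lemma qflip_ne (u : Fin d → Bool) {i j : Fin d} (h : j ≠ i) : qflip u i j = u j := by
  simp [qflip, Function.update_of_ne h]

def canon : (Fin d → Bool) → List (Fin d) → List ((Fin d → Bool) × ℕ)
  | _, [] => []
  | u, i :: l => (qflip u i, (i : ℕ) + 1) :: canon (qflip u i) l

lemma canon_map_snd (u : Fin d → Bool) (l : List (Fin d)) :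
    (canon u l).map Prod.snd = l.map (fun i : Fin d => (i : ℕ) + 1) := by
  induction l generalizing u with
  | nil => rfl
  | cons i l ih => simp [canon, ih]

lemma canon_chain (l : List (Fin d)) : ∀ (u : Fin d → Bool) (t : ℕ),
    List.Chain (fun a b => b.2 ∈ QLab d a.1 b.1) (u, t) (canon u l) := by
  induction l with
  | nil => intro u t; exact List.Chain.nil
  | cons i l ih =>
    intro u t
    refine List.Chain.cons ?_ (ih (qflip u i) _)
    exact ⟨i, rfl, by simp [qflip_self], fun j hj => (qflip_ne u hj).symm⟩

lemma canon_mem_fst {l : List (Fin d)} {u w : Fin d → Bool}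
    (hw : w ∈ (canon u l).map Prod.fst) : ∀ j ∉ l, w j = u j := by
  induction l generalizing u with
  | nil => simp [canon] at hw
  | cons i l ih =>
    intro j hj
    simp only [List.mem_cons, not_or] at hj
    rcases (by simpa [canon] using hw :
        w = qflip u i ∨ w ∈ (canon (qflip u i) l).map Prod.fst) with h | h
    · rw [h, qflip_ne u hj.1]
    · rw [ih h j hj.2, qflip_ne u hj.1]

lemma canon_nodup {l : List (Fin d)} (hl : l.Nodup) (u : Fin d → Bool) :
    (u :: (canon u l).map Prod.fst).Nodup := by
  induction l generalizing u with
  | nil => simp [canon]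
  | cons i l ih =>
    obtain ⟨hi, hl⟩ := List.nodup_cons.mp hl
    refine List.nodup_cons.mpr ⟨?_, ih hl (qflip u i)⟩
    simp only [canon, List.map_cons, List.mem_cons, not_or]
    constructor
    · intro h
      have h2 := congrFun h i
      rw [qflip_self] at h2
      simp at h2
    · intro hmem
      have h3 := canon_mem_fst hmem i hi
      rw [qflip_self] at h3
      simp at h3

lemma canon_getLast (l : List (Fin d)) (u : Fin d → Bool) :
    (u :: (canon u l).map Prod.fst).getLast (List.cons_ne_nil _ _) = l.foldl qflip u := by
  induction l generalizing u with
  | nil => rfl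
  | cons i l ih =>
    show ((u :: ((qflip u i :: (canon (qflip u i) l).map Prod.fst))).getLast _) = _
    rw [List.getLast_cons (List.cons_ne_nil _ _)]
    exact ih (qflip u i)

lemma foldl_qflip {l : List (Fin d)} (hl : l.Nodup) (u : Fin d → Bool) (j : Fin d) :
    l.foldl qflip u j = if j ∈ l then !u j else u j := by
  induction l generalizing u with
  | nil => simp
  | cons i l ih =>
    obtain ⟨hi, hl⟩ := List.nodup_cons.mp hl
    rw [List.foldl_cons, ih hl]
    by_cases hji : j = i
    · subst hji
      simp [hi, qflip_self]
    · rw [qflip_ne u hji]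
      simp [List.mem_cons, hji]

lemma path_canon (p : List ((Fin d → Bool) × ℕ)) : ∀ (u : Fin d → Bool) (t : ℕ),
    List.Chain (fun a b => b.2 ∈ QLab d a.1 b.1) (u, t) p →
    ∃ l : List (Fin d), p = canon u l := by
  induction p with
  | nil => exact fun u t _ => ⟨[], rfl⟩
  | cons b p ih =>
    intro u t hc
    obtain ⟨hstep, hchain⟩ := List.chain_cons.mp hc
    obtain ⟨i, hti, hne, heq⟩ := hstep
    have hb : b.1 = qflip u i := by
      funext j
      by_cases hji : j = i
      · subst hji
        rw [qflip_self]
        have hne' : u j ≠ b.1 j := hne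
        revert hne'
        cases u j <;> cases b.1 j <;> simp
      · rw [qflip_ne u hji, ← heq j hji]
    obtain ⟨l, hl⟩ := ih b.1 b.2 hchain
    refine ⟨i :: l, ?_⟩
    have hb2 : b = (qflip u i, (i : ℕ) + 1) := Prod.ext hb hti
    show b :: p = (qflip u i, (i : ℕ) + 1) :: canon (qflip u i) l
    rw [← hb2, ← hb, ← hl]

lemma sorted_unique {l₁ l₂ : List (Fin d)} (h₁ : List.Chain' (· < ·) l₁)
    (h₂ : List.Chain' (· < ·) l₂) (hmem : ∀ j, j ∈ l₁ ↔ j ∈ l₂) : l₁ = l₂ := by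
  have p₁ := List.isChain_iff_pairwise.mp h₁
  have p₂ := List.isChain_iff_pairwise.mp h₂
  refine List.Perm.eq_of_pairwise (fun a b _ _ h h' => absurd (h.trans h') (lt_irrefl a)) p₁ p₂ ?_
  have n₁ : l₁.Nodup := p₁.imp ne_of_lt
  have n₂ : l₂.Nodup := p₂.imp ne_of_lt
  exact (List.perm_ext_iff_of_nodup n₁ n₂).mpr hmem


lemma temporal_canon {u v : Fin d → Bool} {p : List ((Fin d → Bool) × ℕ)}
    (hp : IsTemporalPath (QLab d) u v p) :
    ∃ l, List.Chain' (· < ·) l ∧ (∀ j, (j ∈ l ↔ u j ≠ v j)) ∧ p = canon u l := by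
  obtain ⟨hc, hinc, hnd, hlast⟩ := hp
  obtain ⟨l, rfl⟩ := path_canon p u 0 hc
  have hsort : List.Chain' (· < ·) l := by
    unfold List.Chain' at hinc ⊢
    rw [canon_map_snd, List.isChain_map] at hinc
    exact hinc.imp (fun a b h => by rw [Fin.lt_def]; omega)
  have hnodup : l.Nodup := (List.isChain_iff_pairwise.mp hsort).imp ne_of_lt
  rw [canon_getLast] at hlast
  refine ⟨l, hsort, ?_, rfl⟩
  intro j
  have hj' := congrFun hlast j
  rw [foldl_qflip hnodup] at hj'
  by_cases hj : j ∈ l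
  · rw [if_pos hj] at hj'
    simp only [hj, true_iff]
    rw [← hj']
    cases u j <;> simp
  · rw [if_neg hj] at hj'
    simp only [hj, false_iff, ne_eq, not_not]
    exact hj'

lemma canon_isPath {u v : Fin d → Bool} {l : List (Fin d)} (hs : List.Chain' (· < ·) l)
    (hm : ∀ j, j ∈ l ↔ u j ≠ v j) : IsTemporalPath (QLab d) u v (canon u l) := by
  have hnd : l.Nodup := (List.isChain_iff_pairwise.mp hs).imp ne_of_lt
  refine ⟨canon_chain l u 0, ?_, canon_nodup hnd u, ?_⟩
  · unfold List.Chain'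
    rw [canon_map_snd, List.isChain_map]
    exact hs.imp (fun a b h => by rw [Fin.lt_def] at h; omega)
  · rw [canon_getLast]
    funext j
    rw [foldl_qflip hnd]
    by_cases hj : j ∈ l
    · have h2 := (hm j).mp hj
      rw [if_pos hj]
      cases hu : u j <;> cases hv : v j <;> simp_all
    · rw [if_neg hj]
      by_contra h
      exact hj ((hm j).mpr h)

end QAux

/-- In the labelled hypercube `Q_d`, for every ordered pair of distinct vertices `u` and `v`
there is exactly one temporal path from `u` to `v`; in particular, when `u` and `v` differ in
exactly one coordinate `i`, the unique temporal path from `u` to `v` is the single edge `uv`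
together with its time label `i + 1`. -/
theorem statement_14 (d : ℕ) (hd : 1 ≤ d) (u v : Fin d → Bool) (huv : u ≠ v) :
    (∃! p : List ((Fin d → Bool) × ℕ), IsTemporalPath (QLab d) u v p) ∧
      ((∃ i : Fin d, u i ≠ v i ∧ ∀ j : Fin d, j ≠ i → u j = v j) →
        ∀ p : List ((Fin d → Bool) × ℕ), IsTemporalPath (QLab d) u v p →
          ∃ i : Fin d, u i ≠ v i ∧ p = [(v, (i : ℕ) + 1)]) := by
  set l₀ := (List.finRange d).filter (fun i => decide (u i ≠ v i)) with hl₀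
  have hm₀ : ∀ j, j ∈ l₀ ↔ u j ≠ v j := by
    intro j
    simp [hl₀, List.mem_filter, List.mem_finRange]
  have hs₀ : List.Chain' (· < ·) l₀ :=
    List.isChain_iff_pairwise.mpr ((List.pairwise_lt_finRange d).sublist List.filter_sublist)
  constructor
  · refine ⟨canon u l₀, canon_isPath hs₀ hm₀, fun p hp => ?_⟩
    obtain ⟨l, hs, hm, rfl⟩ := temporal_canon hp
    rw [sorted_unique hs hs₀ (fun j => (hm j).trans (hm₀ j).symm)]
  · rintro ⟨i, hi, hother⟩ p hp
    obtain ⟨l, hs, hm, rfl⟩ := temporal_canon hp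
    have hli : l = [i] := by
      refine sorted_unique hs (List.isChain_singleton _) (fun j => ?_)
      rw [hm j, List.mem_singleton]
      constructor
      · intro h
        by_contra hji
        exact h (hother j hji)
      · rintro rfl
        exact hi
    refine ⟨i, hi, ?_⟩
    rw [hli]
    show [(qflip u i, (i : ℕ) + 1)] = [(v, (i : ℕ) + 1)]
    have : qflip u i = v := by
      funext j
      by_cases hji : j = i
      · subst hji
        rw [qflip_self]
        revert hi
        cases u j <;> cases v j <;> simp
      · rw [qflip_ne u hji, hother j hji]
    rw [this]
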